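/- For the nilpotent Lie algebras in Family (Ni), with structure equations dphi^1 = dphi^2 = 0, dphi^3 = rho phi^{12} + phi^{1 1bar} + lambda phi^{1 2bar} + D phi^{2 2bar}, where rho in {0,1}, lambda >= 0 is real, D in C with Im D >= 0, and with a balanced Hermitian metric, i.e. 2 omega = i (phi^{1 1bar} + s^2 phi^{2 2bar} + t^2 phi^{3 3bar}) + u phi^{1 2bar} - conj(u) phi^{2 1bar} with s^2 > |u|^2, t^2 > 0, and satisfying the balanced constraint s^2 + D = i conj(u) lambda: the Levi-Civita connection nabla^{LC} is never Kähler-like. -/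

import Mathlib

noncomputable section

open Complex

abbrev V6 : Type := Fin 6 → ℂ

/-- Conjugation on the complexified Lie algebra: swaps the holomorphic and
antiholomorphic coordinates and conjugates. -/
def sigma6 (x : V6) : V6 :=
  ![starRingEnd ℂ (x 3), starRingEnd ℂ (x 4), starRingEnd ℂ (x 5),
    starRingEnd ℂ (x 0), starRingEnd ℂ (x 1), starRingEnd ℂ (x 2)]

/-- The complex structure `J`: multiplication by `i` on `X₁,X₂,X₃` and by `-i`
on their conjugates. -/
def Jmap (x : V6) : V6 :=
  ![I * x 0, I * x 1, I * x 2, -(I * x 3), -(I * x 4), -(I * x 5)]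

/-- `wdg a b = φ^a ∧ φ^b` evaluated on a pair of vectors. -/
def wdg (a b : Fin 6) (x y : V6) : ℂ := x a * y b - x b * y a

/-- The Lie bracket determined by `d φ^k = dk` via `dα(x,y) = -α([x,y])`,
extended by reality to the antiholomorphic coframe. -/
def mkBk (d1 d2 d3 : V6 → V6 → ℂ) (x y : V6) : V6 :=
  ![-(d1 x y), -(d2 x y), -(d3 x y),
    -(starRingEnd ℂ (d1 (sigma6 x) (sigma6 y))),
    -(starRingEnd ℂ (d2 (sigma6 x) (sigma6 y))),
    -(starRingEnd ℂ (d3 (sigma6 x) (sigma6 y)))]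

/-- The (complex-bilinearly extended) Hermitian metric with fundamental form
`2ω = i r² φ^{11̄} + i s² φ^{22̄} + i t² φ^{33̄} + u φ^{12̄} - ū φ^{21̄}
  + v φ^{23̄} - v̄ φ^{32̄} + z φ^{13̄} - z̄ φ^{31̄}`, via `ω(x,y) = g(Jx,y)`. -/
def gm (r s t : ℝ) (u v z : ℂ) (x y : V6) : ℂ :=
  (r ^ 2 : ℂ) / 2 * (x 0 * y 3 + x 3 * y 0)
  + (s ^ 2 : ℂ) / 2 * (x 1 * y 4 + x 4 * y 1)
  + (t ^ 2 : ℂ) / 2 * (x 2 * y 5 + x 5 * y 2)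
  + (-(I * u) / 2) * (x 0 * y 4 + x 4 * y 0)
  + ((I * starRingEnd ℂ u) / 2) * (x 1 * y 3 + x 3 * y 1)
  + (-(I * z) / 2) * (x 0 * y 5 + x 5 * y 0)
  + ((I * starRingEnd ℂ z) / 2) * (x 2 * y 3 + x 3 * y 2)
  + (-(I * v) / 2) * (x 1 * y 5 + x 5 * y 1)
  + ((I * starRingEnd ℂ v) / 2) * (x 2 * y 4 + x 4 * y 2)

/-- Admissibility (positive definiteness) of the metric parameters. -/
def Adm (r s t : ℝ) (u v z : ℂ) : Prop :=
  0 < r ^ 2 ∧ 0 < s ^ 2 ∧ 0 < t ^ 2 ∧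
  ‖u‖ ^ 2 < r ^ 2 * s ^ 2 ∧
  ‖z‖ ^ 2 < r ^ 2 * t ^ 2 ∧
  ‖v‖ ^ 2 < s ^ 2 * t ^ 2 ∧
  t ^ 2 * ‖u‖ ^ 2 + r ^ 2 * ‖v‖ ^ 2 + s ^ 2 * ‖z‖ ^ 2
    < r ^ 2 * s ^ 2 * t ^ 2 + 2 * (I * starRingEnd ℂ u * z * starRingEnd ℂ v).re

/-- `dω` for the invariant 2-form `ω(x,y) = g(Jx,y)`:
`dω(x,y,w) = -ω([x,y],w) + ω([x,w],y) - ω([y,w],x)`. -/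
def dOm (bkf : V6 → V6 → V6) (gf : V6 → V6 → ℂ) (x y w : V6) : ℂ :=
  -(gf (Jmap (bkf x y)) w) + gf (Jmap (bkf x w)) y - gf (Jmap (bkf y w)) x

/-- `T = -dω(J·,J·,J·)`. -/
def Tt (bkf : V6 → V6 → V6) (gf : V6 → V6 → ℂ) (x y w : V6) : ℂ :=
  -(dOm bkf gf (Jmap x) (Jmap y) (Jmap w))

/-- `C = dω(J·,·,·)`. -/
def Ct (bkf : V6 → V6 → V6) (gf : V6 → V6 → ℂ) (x y w : V6) : ℂ :=
  dOm bkf gf (Jmap x) y w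

/-- The curvature 4-tensor of a connection `nab`. -/
def curv (bkf : V6 → V6 → V6) (gf : V6 → V6 → ℂ) (nab : V6 → V6 → V6)
    (x y z w : V6) : ℂ :=
  gf (nab x (nab y z) - nab y (nab x z) - nab (bkf x y) z) w

/-- `nlc` is the Levi-Civita connection:
`2 g(∇ˡᶜ_x y, w) = g([x,y],w) - g([y,w],x) - g([x,w],y)`. -/
def IsLC (bkf : V6 → V6 → V6) (gf : V6 → V6 → ℂ) (nlc : V6 → V6 → V6) : Prop :=
  ∀ x y w, 2 * gf (nlc x y) w = gf (bkf x y) w - gf (bkf y w) x - gf (bkf x w) y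

/-- `nab` is the Gauduchon connection `∇^ε`:
`g(∇^ε_x y, w) = g(∇ˡᶜ_x y, w) + ε T(x,y,w) + (1/2 - ε) C(x,y,w)`. -/
def IsGauduchon (bkf : V6 → V6 → V6) (gf : V6 → V6 → ℂ) (eps : ℝ)
    (nlc nab : V6 → V6 → V6) : Prop :=
  IsLC bkf gf nlc ∧
  ∀ x y w, gf (nab x y) w =
    gf (nlc x y) w + (eps : ℂ) * Tt bkf gf x y w + ((1 / 2 : ℂ) - (eps : ℂ)) * Ct bkf gf x y w

/-- A curvature tensor is Kähler-like if it satisfies the first Bianchi identity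
and the type condition. -/
def KahlerLike (R : V6 → V6 → V6 → V6 → ℂ) : Prop :=
  (∀ x y z w, R x y z w + R y z x w + R z x y w = 0) ∧
  (∀ x y z w, R x y z w = R x y (Jmap z) (Jmap w) ∧ R x y z w = R (Jmap x) (Jmap y) z w)

/-- The basis vectors `X₁,X₂,X₃,X̄₁,X̄₂,X̄₃`. -/
def ee (k : Fin 6) : V6 := fun j => if j = k then 1 else 0

/-- Bracket for Family (Ni):
`dφ¹ = dφ² = 0`, `dφ³ = ρ φ^{12} + φ^{11̄} + λ φ^{12̄} + D φ^{22̄}`. -/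
def bkNi (rho lam : ℝ) (D : ℂ) : V6 → V6 → V6 :=
  mkBk (fun _ _ => 0) (fun _ _ => 0)
    (fun x y => (rho : ℂ) * wdg 0 1 x y + wdg 0 3 x y + (lam : ℂ) * wdg 0 4 x y
      + D * wdg 1 4 x y)

/-- Family (Ni) with a balanced metric (`s² + D = i ū λ`): the Levi-Civita
connection is never Kähler-like. -/
lemma cv0 (a b c d e f : ℂ) : (![a,b,c,d,e,f] : V6) 0 = a := rfl
lemma cv1 (a b c d e f : ℂ) : (![a,b,c,d,e,f] : V6) 1 = b := rfl
lemma cv2 (a b c d e f : ℂ) : (![a,b,c,d,e,f] : V6) 2 = c := rfl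
lemma cv3 (a b c d e f : ℂ) : (![a,b,c,d,e,f] : V6) 3 = d := rfl
lemma cv4 (a b c d e f : ℂ) : (![a,b,c,d,e,f] : V6) 4 = e := rfl
lemma cv5 (a b c d e f : ℂ) : (![a,b,c,d,e,f] : V6) 5 = f := rfl
lemma tcne {t : ℝ} (ht : 0 < t ^ 2) : t ≠ 0 := fun hc => by rw [hc] at ht; simp at ht

lemma uniq (s t : ℝ) (u : ℂ) (hs : ‖u‖ ^ 2 < s ^ 2) (ht : 0 < t ^ 2)
    (p q : V6) (h : ∀ w, gm 1 s t u 0 0 p w = gm 1 s t u 0 0 q w) : p = q := by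
  have hsu : ((s : ℂ) ^ 2 - u * starRingEnd ℂ u) ≠ 0 := by
    rw [Complex.mul_conj]
    have h1 : Complex.normSq u < s ^ 2 := by rwa [← Complex.sq_norm]
    intro hc
    have h2 : ((s ^ 2 - Complex.normSq u : ℝ) : ℂ) = 0 := by push_cast; linear_combination hc
    rw [Complex.ofReal_eq_zero] at h2
    linarith
  have h0 := h (ee 0); have h1 := h (ee 1); have h2 := h (ee 2)
  have h3 := h (ee 3); have h4 := h (ee 4); have h5 := h (ee 5)
  simp [gm, ee] at h0 h1 h2 h3 h4 h5
  funext k; fin_cases k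
  · have key : ((s : ℂ) ^ 2 - u * starRingEnd ℂ u) * (p 0 - q 0) = 0 := by
      linear_combination (2 * (s:ℂ)^2) * h3 - (2 * Complex.I * starRingEnd ℂ u) * h4
        - (u * starRingEnd ℂ u * (p 0 - q 0)) * Complex.I_mul_I
    exact sub_eq_zero.mp ((mul_eq_zero.mp key).resolve_left hsu)
  · have key : ((s : ℂ) ^ 2 - u * starRingEnd ℂ u) * (p 1 - q 1) = 0 := by
      linear_combination (2 * Complex.I * u) * h3 + 2 * h4
        - (u * starRingEnd ℂ u * (p 1 - q 1)) * Complex.I_mul_I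
    exact sub_eq_zero.mp ((mul_eq_zero.mp key).resolve_left hsu)
  · exact h5.resolve_right (tcne ht)
  · have key : ((s : ℂ) ^ 2 - u * starRingEnd ℂ u) * (p 3 - q 3) = 0 := by
      linear_combination (2 * (s:ℂ)^2) * h0 + (2 * Complex.I * u) * h1
        - (u * starRingEnd ℂ u * (p 3 - q 3)) * Complex.I_mul_I
    exact sub_eq_zero.mp ((mul_eq_zero.mp key).resolve_left hsu)
  · have key : ((s : ℂ) ^ 2 - u * starRingEnd ℂ u) * (p 4 - q 4) = 0 := by
      linear_combination (-(2 * Complex.I * starRingEnd ℂ u)) * h0 + 2 * h1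
        - (u * starRingEnd ℂ u * (p 4 - q 4)) * Complex.I_mul_I
    exact sub_eq_zero.mp ((mul_eq_zero.mp key).resolve_left hsu)
  · exact h2.resolve_right (tcne ht)
lemma lc_eq (rho lam : ℝ) (D : ℂ) (s t : ℝ) (u : ℂ)
    (hs : ‖u‖ ^ 2 < s ^ 2) (ht : 0 < t ^ 2)
    (nlc : V6 → V6 → V6) (hlc : IsLC (bkNi rho lam D) (gm 1 s t u 0 0) nlc)
    (x y v : V6)
    (hv : ∀ w, gm 1 s t u 0 0 (bkNi rho lam D x y) w
      - gm 1 s t u 0 0 (bkNi rho lam D y w) x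
      - gm 1 s t u 0 0 (bkNi rho lam D x w) y = 2 * gm 1 s t u 0 0 v w) :
    nlc x y = v := by
  apply uniq s t u hs ht
  intro w
  have h1 := hlc x y w
  rw [hv w] at h1
  exact mul_left_cancel₀ two_ne_zero h1
lemma gm_sub3 (s t : ℝ) (u : ℂ) (a b c w : V6) :
    gm 1 s t u 0 0 (a - b - c) w
      = gm 1 s t u 0 0 a w - gm 1 s t u 0 0 b w - gm 1 s t u 0 0 c w := by
  simp [gm, Pi.sub_apply]; ring

set_option maxHeartbeats 1000000 in
theorem statement6 (rho lam : ℝ) (D : ℂ) (hrho : rho = 0 ∨ rho = 1)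
    (hlam : 0 ≤ lam) (hD : 0 ≤ D.im)
    (s t : ℝ) (u : ℂ) (hs : ‖u‖ ^ 2 < s ^ 2) (ht : 0 < t ^ 2)
    (hbal : (s ^ 2 : ℂ) + D = Complex.I * starRingEnd ℂ u * (lam : ℂ))
    (nlc : V6 → V6 → V6)
    (hlc : IsLC (bkNi rho lam D) (gm 1 s t u 0 0) nlc) :
    ¬ KahlerLike (curv (bkNi rho lam D) (gm 1 s t u 0 0) nlc) := by
  rintro ⟨-, hT⟩
  have hJ3 : Jmap (ee 3) = ![0,0,0,-Complex.I,0,0] := by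
    funext k; fin_cases k <;> simp [Jmap, ee, cv0, cv1, cv2, cv3, cv4, cv5]
  have hJ4 : Jmap (ee 4) = ![0,0,0,0,-Complex.I,0] := by
    funext k; fin_cases k <;> simp [Jmap, ee, cv0, cv1, cv2, cv3, cv4, cv5]
  have hP : nlc (ee 1) (ee 3) = ![0,0,0,0,0,(lam:ℂ)/2] := by
    apply lc_eq rho lam D s t u hs ht nlc hlc
    intro w
    simp [gm, bkNi, mkBk, wdg, sigma6, ee, cv0, cv1, cv2, cv3, cv4, cv5]
    ring
  have hQ : nlc (ee 0) (ee 3) = ![0,0,-(1/2 : ℂ),0,0,(1/2 : ℂ)] := by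
    apply lc_eq rho lam D s t u hs ht nlc hlc
    intro w
    simp [gm, bkNi, mkBk, wdg, sigma6, ee, cv0, cv1, cv2, cv3, cv4, cv5]
    ring
  have hP' : nlc (ee 1) (![0,0,0,-Complex.I,0,0]) = ![0,0,0,0,0,-Complex.I*(lam:ℂ)/2] := by
    apply lc_eq rho lam D s t u hs ht nlc hlc
    intro w
    simp [gm, bkNi, mkBk, wdg, sigma6, ee, cv0, cv1, cv2, cv3, cv4, cv5]
    ring
  have hQ' : nlc (ee 0) (![0,0,0,-Complex.I,0,0])
      = ![0,0,Complex.I/2,0,0,-Complex.I/2] := by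
    apply lc_eq rho lam D s t u hs ht nlc hlc
    intro w
    simp [gm, bkNi, mkBk, wdg, sigma6, ee, cv0, cv1, cv2, cv3, cv4, cv5]
    ring
  have vA : gm 1 s t u 0 0 (nlc (ee 0) (![0,0,0,0,0,(lam:ℂ)/2])) (ee 4)
      = (lam:ℂ)^2*(t:ℂ)^2/8 := by
    apply mul_left_cancel₀ (two_ne_zero (α := ℂ))
    rw [hlc (ee 0) (![0,0,0,0,0,(lam:ℂ)/2]) (ee 4)]
    simp [gm, bkNi, mkBk, wdg, sigma6, ee, cv0, cv1, cv2, cv3, cv4, cv5]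
    ring
  have vB : gm 1 s t u 0 0 (nlc (ee 1) (![0,0,-(1/2 : ℂ),0,0,(1/2 : ℂ)])) (ee 4)
      = (D + starRingEnd ℂ D)*(t:ℂ)^2/8 := by
    apply mul_left_cancel₀ (two_ne_zero (α := ℂ))
    rw [hlc (ee 1) (![0,0,-(1/2 : ℂ),0,0,(1/2 : ℂ)]) (ee 4)]
    simp [gm, bkNi, mkBk, wdg, sigma6, ee, cv0, cv1, cv2, cv3, cv4, cv5]
    ring
  have vC : gm 1 s t u 0 0 (nlc (bkNi rho lam D (ee 0) (ee 1)) (ee 3)) (ee 4)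
      = -(rho:ℂ)^2*(t:ℂ)^2/4 := by
    apply mul_left_cancel₀ (two_ne_zero (α := ℂ))
    rw [hlc (bkNi rho lam D (ee 0) (ee 1)) (ee 3) (ee 4)]
    simp [gm, bkNi, mkBk, wdg, sigma6, ee, cv0, cv1, cv2, cv3, cv4, cv5]
    ring
  have vA' : gm 1 s t u 0 0 (nlc (ee 0) (![0,0,0,0,0,-Complex.I*(lam:ℂ)/2]))
      (![0,0,0,0,-Complex.I,0]) = -((lam:ℂ)^2*(t:ℂ)^2/8) := by
    apply mul_left_cancel₀ (two_ne_zero (α := ℂ))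
    rw [hlc (ee 0) (![0,0,0,0,0,-Complex.I*(lam:ℂ)/2]) (![0,0,0,0,-Complex.I,0])]
    simp [gm, bkNi, mkBk, wdg, sigma6, ee, cv0, cv1, cv2, cv3, cv4, cv5]
    linear_combination (-((t:ℂ)^2*(lam:ℂ)^2/4)) * Complex.I_mul_I
  have vB' : gm 1 s t u 0 0 (nlc (ee 1) (![0,0,Complex.I/2,0,0,-Complex.I/2]))
      (![0,0,0,0,-Complex.I,0]) = -((D + starRingEnd ℂ D)*(t:ℂ)^2/8) := by
    apply mul_left_cancel₀ (two_ne_zero (α := ℂ))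
    rw [hlc (ee 1) (![0,0,Complex.I/2,0,0,-Complex.I/2]) (![0,0,0,0,-Complex.I,0])]
    simp [gm, bkNi, mkBk, wdg, sigma6, ee, cv0, cv1, cv2, cv3, cv4, cv5]
    linear_combination (-((t:ℂ)^2*(D + starRingEnd ℂ D)/4)) * Complex.I_mul_I
  have vC' : gm 1 s t u 0 0 (nlc (bkNi rho lam D (ee 0) (ee 1)) (![0,0,0,-Complex.I,0,0]))
      (![0,0,0,0,-Complex.I,0]) = (rho:ℂ)^2*(t:ℂ)^2/4 := by
    apply mul_left_cancel₀ (two_ne_zero (α := ℂ))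
    rw [hlc (bkNi rho lam D (ee 0) (ee 1)) (![0,0,0,-Complex.I,0,0]) (![0,0,0,0,-Complex.I,0])]
    simp [gm, bkNi, mkBk, wdg, sigma6, ee, cv0, cv1, cv2, cv3, cv4, cv5]
    ring
  have h := (hT (ee 0) (ee 1) (ee 3) (ee 4)).1
  simp only [curv] at h
  rw [hJ3, hJ4, hP, hQ, hP', hQ'] at h
  rw [gm_sub3, gm_sub3] at h
  rw [vA, vB, vC, vA', vB', vC'] at h
  -- h : λ²t²/8 - (D+D̄)t²/8 - (-ρ²t²/4) = -λ²t²/8 - (-(D+D̄)t²/8) - ρ²t²/4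
  have hbal2 : (s ^ 2 : ℂ) + starRingEnd ℂ D
      = -Complex.I * u * (lam : ℂ) := by
    have := congrArg (starRingEnd ℂ) hbal
    simpa [map_add, map_mul, Complex.conj_ofReal, Complex.conj_I] using this
  have hu : u = (u.re : ℂ) + (u.im : ℂ) * Complex.I := (Complex.re_add_im u).symm
  have hcu : starRingEnd ℂ u = (u.re : ℂ) - (u.im : ℂ) * Complex.I := by
    rw [Complex.ext_iff]; simp
  have ht' : ((t : ℂ) ^ 2) ≠ 0 := by
    simpa using pow_ne_zero 2 (Complex.ofReal_ne_zero.mpr (tcne ht))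
  have hkey : (((lam^2 + 2*rho^2 + 2*s^2 - 2*lam*u.im : ℝ)) : ℂ) = 0 := by
    apply mul_left_cancel₀ ht'
    push_cast
    linear_combination 4*h + (t:ℂ)^2 * hbal + (t:ℂ)^2 * hbal2
      + ((t:ℂ)^2*(lam:ℂ)*Complex.I) * hcu - ((t:ℂ)^2*(lam:ℂ)*Complex.I) * hu
      - (2*(t:ℂ)^2*(lam:ℂ)*(u.im:ℂ)) * Complex.I_mul_I
  rw [Complex.ofReal_eq_zero] at hkey
  have hs' : u.re ^ 2 + u.im ^ 2 < s ^ 2 := by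
    have := hs; rw [Complex.sq_norm, Complex.normSq_apply] at this; nlinarith
  nlinarith [sq_nonneg (lam - u.im), sq_nonneg rho, sq_nonneg u.re, hs', hkey]
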